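/- Fix integers n ≥ k ≥ 1 and a subset S ⊆ {1,…,n} with |S| = k. For x ∈ {−1,1}^n, let t_S(x) = 1 if x_i = 1 for all i ∈ S and t_S(x) = −1 otherwise, so t_S(x) = −1 + 2^{−k+1}·Σ_{I⊆S} Π_{i∈I} x_i. Let φ_S(x) = −1 + 2^{−k+1} + 2^{−k+1}·Σ_{I⊆S, |I| > k/3} Π_{i∈I} x_i. There is an absolute constant c ∈ (0,1) such that |t_S(x) − φ_S(x)| ≤ 2^{−ck} for every x ∈ {−1,1}^n; consequently, for all sufficiently large k, sgn(φ_S(x)) = t_S(x) for every x ∈ {−1,1}^n. -/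

import Mathlib

open Finset

/-- The conjunction on the coordinates in `S`, as a `±1`-valued function on `{-1,1}^n ⊆ ℝ^n`. -/
noncomputable def conj (n : ℕ) (S : Finset (Fin n)) (x : Fin n → ℝ) : ℝ :=
  if ∀ i ∈ S, x i = 1 then 1 else -1

/-- The Fourier truncation `φ_S` of the conjunction `t_S`, obtained by zeroing out all Fourier
coefficients on subsets `I ⊆ S` with `1 ≤ |I| ≤ k/3`. -/
noncomputable def phiS (n k : ℕ) (S : Finset (Fin n)) (x : Fin n → ℝ) : ℝ :=
  -1 + (2:ℝ) ^ (1 - (k:ℤ)) + (2:ℝ) ^ (1 - (k:ℤ)) *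
    ∑ I ∈ S.powerset.filter fun I => k < 3 * I.card, ∏ i ∈ I, x i

/-! ### Auxiliary natural-number estimates -/

/-- A kernel-computable version of the binomial coefficient. -/
def binom (n k : ℕ) : ℕ := n.descFactorial k / k.factorial

lemma binom_eq (n k : ℕ) : binom n k = n.choose k :=
  (Nat.choose_eq_descFactorial_div_factorial n k).symm

lemma step_lemma {k j : ℕ} (h : 3 * (j+1) ≤ k) :
    2 * k.choose j ≤ k.choose (j+1) := by
  have h1 : k.choose (j+1) * (j+1) = k.choose j * (k - j) := Nat.choose_succ_right_eq k j
  have h2 : 2 * (j+1) ≤ k - j := by omega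
  have h3 : 2 * k.choose j * (j+1) ≤ k.choose (j+1) * (j+1) := by
    calc 2 * k.choose j * (j+1) = k.choose j * (2*(j+1)) := by ring
    _ ≤ k.choose j * (k - j) := Nat.mul_le_mul_left _ h2
    _ = k.choose (j+1) * (j+1) := h1.symm
  exact Nat.le_of_mul_le_mul_right h3 (Nat.succ_pos j)

lemma geom (m : ℕ) : ∀ k, 3 * m ≤ k → ∑ j ∈ Icc 1 m, Nat.choose k j ≤ 2 * Nat.choose k m := by
  induction m with
  | zero => intro k _; simp
  | succ m ih =>
    intro k hk
    rw [Finset.sum_Icc_succ_top (by omega)]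
    have h1 := ih k (by omega)
    have h2 := step_lemma (k:=k) (j:=m) (by omega)
    omega

lemma central {k m : ℕ} (h : m ≤ k) : Nat.choose k m * 2 ^ (k - m) ≤ 3 ^ k := by
  calc Nat.choose k m * 2 ^ (k-m) = 1^m * 2^(k-m) * k.choose m := by ring
  _ ≤ ∑ j ∈ range (k+1), 1^j * 2^(k-j) * k.choose j :=
      Finset.single_le_sum (f := fun j => 1^j * 2^(k-j) * k.choose j)
        (fun i _ => Nat.zero_le _) (mem_range.mpr (Nat.lt_succ_of_le h))
  _ = (1+2)^k := by rw [add_pow]; simp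
  _ = 3^k := by norm_num

set_option exponentiation.threshold 5000 in
set_option maxRecDepth 10000 in
lemma small_check :
    ∀ k ∈ Icc 3 35, (∑ j ∈ Icc 1 (k/3), binom k j) ^ 100 ≤ 2 ^ (99*k - 100) := by decide

lemma key (k : ℕ) : (∑ j ∈ Icc 1 (k/3), Nat.choose k j) ^ 100 ≤ 2 ^ (99*k - 100) := by
  by_cases hk3 : k < 3
  · have : k / 3 = 0 := by omega
    rw [this]
    simp
  by_cases hk : k ≤ 35
  · have := small_check k (by simp; omega)
    simpa only [binom_eq] using this
  push_neg at hk hk3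
  set N := ∑ j ∈ Icc 1 (k/3), Nat.choose k j with hNdef
  set m := k / 3 with hmdef
  have hm : 3 * m ≤ k := by omega
  have hmk : m ≤ k := by omega
  have hN : N ≤ 2 * Nat.choose k m := geom m k hm
  have h2 : Nat.choose k m * 2 ^ (k - m) ≤ 3 ^ k := central hmk
  have e1 : N ^ 3 * 2 ^ (2*k) ≤ 2^3 * 3 ^ (3*k) := by
    calc N ^ 3 * 2 ^ (2*k) ≤ (2 * Nat.choose k m)^3 * 2^(2*k) :=
           Nat.mul_le_mul_right _ (Nat.pow_le_pow_left hN 3)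
      _ = 2^3 * ((Nat.choose k m)^3 * 2^(2*k)) := by ring
      _ ≤ 2^3 * ((Nat.choose k m)^3 * 2^((k-m)*3)) := by
           have h23 : 2*k ≤ (k-m)*3 := by omega
           exact Nat.mul_le_mul_left _ (Nat.mul_le_mul_left _
             (Nat.pow_le_pow_right (by norm_num) h23))
      _ = 2^3 * (Nat.choose k m * 2^(k-m))^3 := by rw [pow_mul]; ring
      _ ≤ 2^3 * (3^k)^3 := Nat.mul_le_mul_left _ (Nat.pow_le_pow_left h2 3)
      _ = 2^3 * 3^(3*k) := by rw [← pow_mul]; ring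
  have e2 : N ^ 300 * 2^(200*k) ≤ 2^(480*k+300) := by
    calc N^300 * 2^(200*k) = (N^3 * 2^(2*k))^100 := by
           rw [mul_pow, ← pow_mul, ← pow_mul]; ring_nf
      _ ≤ (2^3 * 3^(3*k))^100 := Nat.pow_le_pow_left e1 100
      _ = 2^300 * (3^5)^(60*k) := by
           rw [mul_pow, ← pow_mul, ← pow_mul, ← pow_mul]; ring_nf
      _ ≤ 2^300 * (2^8)^(60*k) := Nat.mul_le_mul_left _ (Nat.pow_le_pow_left (by norm_num) _)
      _ = 2^(480*k+300) := by rw [← pow_mul, ← pow_add]; ring_nf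
  have e3 : N^300 ≤ 2^(297*k-300) := by
    have h4 : N ^ 300 * 2^(200*k) ≤ 2^(497*k - 300) :=
      le_trans e2 (Nat.pow_le_pow_right (by norm_num) (by omega))
    have h5 : (2:ℕ)^(497*k-300) = 2^(297*k-300) * 2^(200*k) := by
      have hexp : 497*k-300 = (297*k-300) + 200*k := by omega
      rw [hexp, pow_add]
    rw [h5] at h4
    exact Nat.le_of_mul_le_mul_right h4 (Nat.pow_pos (by norm_num))
  have e4 : (N^100)^3 ≤ (2^(99*k-100))^3 := by
    rw [← pow_mul, ← pow_mul, show 100*3 = 300 by norm_num]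
    have : (99*k-100)*3 = 297*k - 300 := by omega
    rw [this]; exact e3
  exact (Nat.pow_le_pow_iff_left (by norm_num)).mp e4

/-! ### Real-valued lemmas -/

lemma sum_powerset_eq (n : ℕ) (S : Finset (Fin n)) (x : Fin n → ℝ) :
    ∑ I ∈ S.powerset, ∏ i ∈ I, x i = ∏ i ∈ S, (x i + 1) := by
  rw [Finset.prod_add]
  simp

lemma expansion {n k : ℕ} (S : Finset (Fin n)) (hS : S.card = k)
    (x : Fin n → ℝ) (hx : ∀ i, x i = 1 ∨ x i = -1) :
    conj n S x = -1 + (2:ℝ) ^ (1 - (k:ℤ)) * ∑ I ∈ S.powerset, ∏ i ∈ I, x i := by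
  rw [sum_powerset_eq, conj]
  by_cases h : ∀ i ∈ S, x i = 1
  · rw [if_pos h]
    have hprod : ∏ i ∈ S, (x i + 1) = 2 ^ k := by
      calc ∏ i ∈ S, (x i + 1) = ∏ _i ∈ S, (2:ℝ) :=
            Finset.prod_congr rfl (fun i hi => by rw [h i hi]; norm_num)
        _ = 2 ^ k := by rw [Finset.prod_const, hS]
    rw [hprod]
    have h2 : (2:ℝ) ^ (1 - (k:ℤ)) * 2 ^ k = 2 := by
      rw [← zpow_natCast (2:ℝ) k, ← zpow_add₀ (by norm_num : (2:ℝ) ≠ 0)]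
      norm_num
    rw [h2]; ring
  · rw [if_neg h]
    push_neg at h
    obtain ⟨i, hi, hxi⟩ := h
    have hxi' : x i = -1 := (hx i).resolve_left hxi
    have hz : ∏ i ∈ S, (x i + 1) = 0 :=
      Finset.prod_eq_zero hi (by rw [hxi']; ring)
    rw [hz]; ring

lemma diff_eq {n k : ℕ} (S : Finset (Fin n)) (hS : S.card = k)
    (x : Fin n → ℝ) (hx : ∀ i, x i = 1 ∨ x i = -1) :
    conj n S x - phiS n k S x
      = (2:ℝ)^(1-(k:ℤ)) *
        ∑ I ∈ ((S.powerset.filter fun I => ¬ k < 3*I.card).erase ∅), ∏ i ∈ I, x i := by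
  rw [expansion S hS x hx, phiS]
  have hsplit := Finset.sum_filter_add_sum_filter_not S.powerset
      (fun I => k < 3*I.card) (fun I => ∏ i ∈ I, x i)
  have hempty : (∅ : Finset (Fin n)) ∈ S.powerset.filter fun I => ¬ k < 3*I.card := by
    simp
  have herase := Finset.add_sum_erase _ (fun I => ∏ i ∈ I, x i) hempty
  simp only [Finset.prod_empty] at herase
  rw [← hsplit, ← herase]
  ring

lemma card_bound {n k : ℕ} (S : Finset (Fin n)) (hS : S.card = k) :
    ((S.powerset.filter fun I => ¬ k < 3*I.card).erase ∅).card
      ≤ ∑ j ∈ Icc 1 (k/3), Nat.choose k j := by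
  set T := ((S.powerset.filter fun I => ¬ k < 3*I.card).erase ∅) with hT
  have hmem : ∀ I ∈ T, I.card ∈ Icc 1 (k/3) := by
    intro I hI
    rw [hT, Finset.mem_erase, Finset.mem_filter, Finset.mem_powerset] at hI
    obtain ⟨hne, hsub, hcard⟩ := hI
    have h1 : 1 ≤ I.card := Finset.card_pos.mpr (Finset.nonempty_iff_ne_empty.mpr hne)
    have h2 : I.card ≤ k / 3 := by omega
    exact Finset.mem_Icc.mpr ⟨h1, h2⟩
  rw [Finset.card_eq_sum_card_fiberwise hmem]
  apply Finset.sum_le_sum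
  intro j hj
  have hsub : T.filter (fun I => I.card = j) ⊆ S.powersetCard j := by
    intro I hI
    rw [Finset.mem_filter] at hI
    obtain ⟨hI1, hI2⟩ := hI
    rw [hT, Finset.mem_erase, Finset.mem_filter, Finset.mem_powerset] at hI1
    exact Finset.mem_powersetCard.mpr ⟨hI1.2.1, hI2⟩
  calc (T.filter (fun I => I.card = j)).card ≤ (S.powersetCard j).card :=
        Finset.card_le_card hsub
    _ = Nat.choose k j := by rw [Finset.card_powersetCard, hS]

lemma abs_sum_le {n : ℕ} (T : Finset (Finset (Fin n))) (x : Fin n → ℝ)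
    (hx : ∀ i, x i = 1 ∨ x i = -1) :
    |∑ I ∈ T, ∏ i ∈ I, x i| ≤ (T.card : ℝ) := by
  calc |∑ I ∈ T, ∏ i ∈ I, x i| ≤ ∑ I ∈ T, |∏ i ∈ I, x i| :=
        Finset.abs_sum_le_sum_abs _ _
    _ = ∑ _I ∈ T, (1:ℝ) := by
        apply Finset.sum_congr rfl
        intro I _
        rw [Finset.abs_prod]
        apply Finset.prod_eq_one
        intro i _
        rcases hx i with h | h <;> rw [h] <;> norm_num
    _ = (T.card : ℝ) := by simp

lemma bound {n k : ℕ} (hk : 1 ≤ k) (S : Finset (Fin n)) (hS : S.card = k)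
    (x : Fin n → ℝ) (hx : ∀ i, x i = 1 ∨ x i = -1) :
    |conj n S x - phiS n k S x| ≤ (2:ℝ) ^ (-(1/100 * (k:ℝ))) := by
  set N := ∑ j ∈ Icc 1 (k/3), Nat.choose k j with hNdef
  have hzpos : (0:ℝ) < (2:ℝ)^(1-(k:ℤ)) := by positivity
  have h1 : |conj n S x - phiS n k S x| ≤ (2:ℝ)^(1-(k:ℤ)) * N := by
    rw [diff_eq S hS x hx, abs_mul, abs_of_pos hzpos]
    have ha := abs_sum_le ((S.powerset.filter fun I => ¬ k < 3*I.card).erase ∅) x hx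
    have hc : ((((S.powerset.filter fun I => ¬ k < 3*I.card).erase ∅)).card : ℝ) ≤ (N:ℝ) :=
      Nat.cast_le.mpr (card_bound S hS)
    have := le_trans ha hc
    exact mul_le_mul_of_nonneg_left this (le_of_lt hzpos)
  rcases lt_or_ge k 3 with h3 | h3
  · have hN0 : N = 0 := by
      rw [hNdef]
      have hk0 : k/3 = 0 := by omega
      rw [hk0]
      simp
    rw [hN0] at h1
    simp only [Nat.cast_zero, mul_zero] at h1
    refine le_trans h1 ?_
    positivity
  · refine le_trans h1 ?_
    apply le_of_pow_le_pow_left₀ (n := 100) (by norm_num) (by positivity)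
    have hRHS : ((2:ℝ) ^ (-(1/100 * (k:ℝ))))^(100:ℕ) = (2:ℝ)^(-(k:ℤ)) := by
      rw [← Real.rpow_natCast ((2:ℝ) ^ (-(1/100 * (k:ℝ)))) 100,
          ← Real.rpow_mul (by norm_num)]
      rw [show (-(1/100 * (k:ℝ)) * ((100:ℕ):ℝ)) = ((-(k:ℤ) : ℤ) : ℝ) by push_cast; ring]
      exact Real.rpow_intCast 2 _
    rw [hRHS, mul_pow]
    have hL : ((2:ℝ)^(1-(k:ℤ)))^(100:ℕ) = (2:ℝ)^((1-(k:ℤ))*100) := by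
      rw [← zpow_natCast ((2:ℝ)^(1-(k:ℤ))) 100, ← zpow_mul]
      norm_num
    rw [hL]
    have hkey : ((N:ℝ))^(100:ℕ) ≤ (2:ℝ)^(99*(k:ℤ)-100) := by
      have hnat := key k
      have hcast : ((N^100 : ℕ) : ℝ) ≤ ((2^(99*k-100) : ℕ) : ℝ) := Nat.cast_le.mpr hnat
      rw [show (99*(k:ℤ)-100) = ((99*k-100 : ℕ) : ℤ) by omega, zpow_natCast]
      push_cast at hcast
      exact_mod_cast hcast
    calc (2:ℝ)^((1-(k:ℤ))*100) * (N:ℝ)^100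
        ≤ (2:ℝ)^((1-(k:ℤ))*100) * (2:ℝ)^(99*(k:ℤ)-100) := by
          exact mul_le_mul_of_nonneg_left hkey (by positivity)
      _ = (2:ℝ)^(-(k:ℤ)) := by
          rw [← zpow_add₀ (by norm_num : (2:ℝ) ≠ 0)]
          congr 1
          ring

theorem conj_fourier_truncation_close :
    ∃ c : ℝ, 0 < c ∧ c < 1 ∧
      (∀ (n k : ℕ), 1 ≤ k → k ≤ n → ∀ S : Finset (Fin n), S.card = k →
        ∀ x : Fin n → ℝ, (∀ i, x i = 1 ∨ x i = -1) →
          (conj n S x = -1 + (2:ℝ) ^ (1 - (k:ℤ)) * ∑ I ∈ S.powerset, ∏ i ∈ I, x i) ∧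
          |conj n S x - phiS n k S x| ≤ (2:ℝ) ^ (-(c * (k:ℝ)))) ∧
      ∃ k₀ : ℕ, ∀ (n k : ℕ), k₀ ≤ k → k ≤ n → ∀ S : Finset (Fin n), S.card = k →
        ∀ x : Fin n → ℝ, (∀ i, x i = 1 ∨ x i = -1) →
          Real.sign (phiS n k S x) = conj n S x := by
  refine ⟨1/100, by norm_num, by norm_num, ?_, 1, ?_⟩
  · intro n k hk hkn S hS x hx
    exact ⟨expansion S hS x hx, bound hk S hS x hx⟩
  · intro n k hk hkn S hS x hx
    have hb := bound hk S hS x hx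
    have hkpos : (0:ℝ) < (k:ℝ) := by exact_mod_cast hk
    have hlt : (2:ℝ) ^ (-(1/100 * (k:ℝ))) < 1 :=
      Real.rpow_lt_one_of_one_lt_of_neg (by norm_num) (by nlinarith)
    have habs : |conj n S x - phiS n k S x| < 1 := lt_of_le_of_lt hb hlt
    rw [abs_lt] at habs
    rw [conj] at habs ⊢
    by_cases h : ∀ i ∈ S, x i = 1
    · rw [if_pos h] at habs ⊢
      have hpos : 0 < phiS n k S x := by linarith [habs.1, habs.2]
      rw [Real.sign_of_pos hpos]
    · rw [if_neg h] at habs ⊢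
      have hneg : phiS n k S x < 0 := by linarith [habs.1, habs.2]
      rw [Real.sign_of_neg hneg]
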